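/- Let $(m_n)$ be a sequence of positive reals with $m_n \to \infty$, and for each $n$ let $(Z^{i,n})_{i \in \mathbb{N}}$ be non-negative reals and $(U^i)_{i \in \mathbb{N}}$ non-negative reals with $\sum_i U^i < \infty$. Suppose that: (a) $Z^{i,n} \to U^i$ as $n \to \infty$ for each $i$, and (b) for every $\eta > 0$ there exists $k$ such that $\sum_{i > k} Z^{i,n} < \eta$ for all sufficiently large $n$ and $\sum_{i > k} U^i < \eta$. Then $m_n\left(1 - \prod_{i \geq 1}(1 - m_n^{-1} Z^{i,n})\right) \to \sum_{i \geq 1} U^i$, where the product is over those $i$ with $m_n^{-1} Z^{i,n} < 1$ (which holds for all $i$ when $n$ is large enough). -/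

import Mathlib

open Filter Topology

lemma aux_one_sub_sum_le_prod (x : ℕ → ℝ) (h0 : ∀ i, 0 ≤ x i) (h1 : ∀ i, x i ≤ 1)
    (s : Finset ℕ) : 1 - ∑ i ∈ s, x i ≤ ∏ i ∈ s, (1 - x i) := by
  induction s using Finset.cons_induction with
  | empty => simp
  | cons a s ha ih =>
    rw [Finset.prod_cons, Finset.sum_cons]
    have hb : 0 ≤ ∑ i ∈ s, x i := Finset.sum_nonneg fun i _ => h0 i
    calc 1 - (x a + ∑ i ∈ s, x i) ≤ (1 - x a) * (1 - ∑ i ∈ s, x i) := by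
          nlinarith [h0 a, h1 a]
      _ ≤ (1 - x a) * ∏ i ∈ s, (1 - x i) :=
          mul_le_mul_of_nonneg_left ih (by linarith [h1 a])

lemma aux_hasProd (f : ℕ → ℝ) (h0 : ∀ i, 0 ≤ f i) (h1 : ∀ i, f i ≤ 1) :
    HasProd f (⨅ s : Finset ℕ, ∏ i ∈ s, f i) := by
  apply tendsto_atTop_ciInf
  · intro s t hst
    dsimp only
    rw [← Finset.prod_sdiff hst]
    exact mul_le_of_le_one_left (Finset.prod_nonneg fun i _ => h0 i)
      (Finset.prod_le_one (fun i _ => h0 i) (fun i _ => h1 i))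
  · exact ⟨0, by rintro _ ⟨s, rfl⟩; exact Finset.prod_nonneg fun i _ => h0 i⟩

lemma aux_split (f : ℕ → ℝ) (hf : Summable f) (k : ℕ) :
    (∑ i ∈ Finset.range (k+1), f i) + ∑' i : {i : ℕ // k < i}, f (i : ℕ) = ∑' i, f i := by
  have h := Summable.sum_add_tsum_subtype_compl hf (Finset.range (k+1))
  have he : ∑' (x : {x // x ∉ Finset.range (k+1)}), f ↑x
      = ∑' i : {i : ℕ // k < i}, f (i : ℕ) :=
    Equiv.tsum_eq (Equiv.subtypeEquivRight (fun x => by simp [Nat.lt_succ_iff]))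
      (fun i : {i : ℕ // k < i} => f i)
  rw [he] at h
  exact h

lemma aux_S_tendsto (Z : ℕ → ℕ → ℝ) (U : ℕ → ℝ)
    (hZ_nonneg : ∀ n i, 0 ≤ Z n i) (hZ_sum : ∀ n, Summable (Z n))
    (hU_nonneg : ∀ i, 0 ≤ U i) (hU_sum : Summable U)
    (ha : ∀ i, Tendsto (fun n => Z n i) atTop (𝓝 (U i)))
    (hb : ∀ η > (0 : ℝ), ∃ k : ℕ,
      (∀ᶠ n in atTop, ∑' i : {i : ℕ // k < i}, Z n i < η) ∧
      ∑' i : {i : ℕ // k < i}, U i < η) :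
    Tendsto (fun n => ∑' i, Z n i) atTop (𝓝 (∑' i, U i)) := by
  rw [Metric.tendsto_nhds]
  intro ε hε
  obtain ⟨k, hZt, hUt⟩ := hb (ε/3) (by linarith)
  have hfin : Tendsto (fun n => ∑ i ∈ Finset.range (k+1), Z n i) atTop
      (𝓝 (∑ i ∈ Finset.range (k+1), U i)) := tendsto_finset_sum _ fun i _ => ha i
  have hfin' := (Metric.tendsto_nhds.1 hfin) (ε/3) (by linarith)
  filter_upwards [hZt, hfin'] with n h1 h2
  have e1 := aux_split (Z n) (hZ_sum n) k
  have e2 := aux_split U hU_sum k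
  have tZ : (0:ℝ) ≤ ∑' i : {i : ℕ // k < i}, Z n i :=
    tsum_nonneg fun i => hZ_nonneg n i
  have tU : (0:ℝ) ≤ ∑' i : {i : ℕ // k < i}, U i :=
    tsum_nonneg fun i => hU_nonneg i
  rw [Real.dist_eq] at h2 ⊢
  rw [← e1, ← e2, abs_lt] at *
  obtain ⟨h2a, h2b⟩ := h2
  constructor <;> linarith

theorem stmt3 (m : ℕ → ℝ) (Z : ℕ → ℕ → ℝ) (U : ℕ → ℝ)
    (hm : Tendsto m atTop atTop) (hm_pos : ∀ n, 0 < m n)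
    (hZ_nonneg : ∀ n i, 0 ≤ Z n i) (hZ_sum : ∀ n, Summable (Z n))
    (hU_nonneg : ∀ i, 0 ≤ U i) (hU_sum : Summable U)
    (ha : ∀ i, Tendsto (fun n => Z n i) atTop (𝓝 (U i)))
    (hb : ∀ η > (0 : ℝ), ∃ k : ℕ,
      (∀ᶠ n in atTop, ∑' i : {i : ℕ // k < i}, Z n i < η) ∧
      ∑' i : {i : ℕ // k < i}, U i < η) :
    Tendsto
      (fun n => m n * (1 - ∏' i, (if Z n i / m n < 1 then 1 - Z n i / m n else 1)))
      atTop (𝓝 (∑' i, U i)) := by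
  set T := ∑' i, U i with hT
  set S := fun n => ∑' i, Z n i with hSdef
  have hT0 : 0 ≤ T := tsum_nonneg hU_nonneg
  have hS_t : Tendsto S atTop (𝓝 T) :=
    aux_S_tendsto Z U hZ_nonneg hZ_sum hU_nonneg hU_sum ha hb
  have hS0 : ∀ n, 0 ≤ S n := fun n => tsum_nonneg (hZ_nonneg n)
  have hev : ∀ᶠ n in atTop, S n < T + 1 ∧ T + 1 ≤ m n :=
    (hS_t.eventually (gt_mem_nhds (lt_add_one T))).and (hm.eventually_ge_atTop (T+1))
  -- key bounds on the event
  have key : ∀ n, S n < T + 1 → T + 1 ≤ m n →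
      S n / (1 + S n / m n) ≤
        m n * (1 - ∏' i, (if Z n i / m n < 1 then 1 - Z n i / m n else 1)) ∧
      m n * (1 - ∏' i, (if Z n i / m n < 1 then 1 - Z n i / m n else 1)) ≤ S n := by
    intro n hSn hmn
    have hmn0 : 0 < m n := hm_pos n
    have hlt : ∀ i, Z n i / m n < 1 := by
      intro i
      rw [div_lt_one hmn0]
      exact lt_of_le_of_lt (Summable.le_tsum (hZ_sum n) i (fun j _ => hZ_nonneg n j))
        (lt_of_lt_of_le hSn hmn)
    have hpe : (∏' i, (if Z n i / m n < 1 then 1 - Z n i / m n else 1))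
        = ∏' i, (1 - Z n i / m n) := tprod_congr fun i => if_pos (hlt i)
    rw [hpe]
    set x : ℕ → ℝ := fun i => Z n i / m n with hx
    have hx0 : ∀ i, 0 ≤ x i := fun i => div_nonneg (hZ_nonneg n i) hmn0.le
    have hx1 : ∀ i, x i ≤ 1 := fun i => (hlt i).le
    have hxsum : Summable x := (hZ_sum n).div_const _
    have hxt : ∑' i, x i = S n / m n := tsum_div_const
    have hf0 : ∀ i, 0 ≤ 1 - x i := fun i => by linarith [hx1 i]
    have hf1 : ∀ i, 1 - x i ≤ 1 := fun i => by linarith [hx0 i]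
    have hmul : Multipliable (fun i => 1 - x i) := ⟨_, aux_hasProd _ hf0 hf1⟩
    have hp : HasProd (fun i => 1 - x i) (∏' i, (1 - x i)) := hmul.hasProd
    set g := ∏' i, (1 - x i) with hg
    -- lower bound on g
    have hgl : 1 - S n / m n ≤ g := by
      refine ge_of_tendsto' hp (fun s => ?_)
      refine le_trans ?_ (aux_one_sub_sum_le_prod x hx0 hx1 s)
      have : ∑ i ∈ s, x i ≤ ∑' i, x i := Summable.sum_le_tsum s (fun i _ => hx0 i) hxsum
      rw [hxt] at this; linarith
    -- upper bound on g
    have hgu : g ≤ Real.exp (-(S n / m n)) := by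
      have h2 : Tendsto (fun s : Finset ℕ => Real.exp (-(∑ i ∈ s, x i))) atTop
          (𝓝 (Real.exp (-(S n / m n)))) := by
        have h3 : Tendsto (fun s : Finset ℕ => ∑ i ∈ s, x i) atTop (𝓝 (S n / m n)) := by
          have := hxsum.hasSum; rwa [hxt] at this
        exact (Real.continuous_exp.tendsto _).comp h3.neg
      refine le_of_tendsto_of_tendsto' hp h2 (fun s => ?_)
      calc ∏ i ∈ s, (1 - x i) ≤ ∏ i ∈ s, Real.exp (-(x i)) :=
            Finset.prod_le_prod (fun i _ => hf0 i)
              (fun i _ => by linarith [Real.add_one_le_exp (-(x i))])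
        _ = Real.exp (∑ i ∈ s, -(x i)) := (Real.exp_sum s _).symm
        _ = Real.exp (-(∑ i ∈ s, x i)) := by rw [Finset.sum_neg_distrib]
    have hu : 0 ≤ S n / m n := div_nonneg (hS0 n) hmn0.le
    have h1u : (0:ℝ) < 1 + S n / m n := by linarith
    constructor
    · -- lower bound
      have hgu' : g ≤ (1 + S n / m n)⁻¹ := by
        refine hgu.trans ?_
        rw [Real.exp_neg]
        exact inv_anti₀ h1u (by linarith [Real.add_one_le_exp (S n / m n)])
      have hms : m n + S n ≠ 0 := ne_of_gt (by linarith [hS0 n])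
      have hkey : S n / (1 + S n / m n) = m n * (1 - (1 + S n / m n)⁻¹) := by
        field_simp
        ring
      rw [hkey]
      exact mul_le_mul_of_nonneg_left (by linarith) hmn0.le
    · -- upper bound
      have : m n * (1 - g) ≤ m n * (S n / m n) :=
        mul_le_mul_of_nonneg_left (by linarith) hmn0.le
      rwa [mul_div_cancel₀ _ hmn0.ne'] at this
  have hL : Tendsto (fun n => S n / (1 + S n / m n)) atTop (𝓝 T) := by
    have h0 : Tendsto (fun n => S n / m n) atTop (𝓝 0) := hS_t.div_atTop hm
    have h1 : Tendsto (fun n => 1 + S n / m n) atTop (𝓝 1) := by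
      simpa using tendsto_const_nhds.add h0
    have := hS_t.div h1 one_ne_zero; rw [div_one] at this; exact this
  refine tendsto_of_tendsto_of_tendsto_of_le_of_le' hL hS_t ?_ ?_
  · filter_upwards [hev] with n ⟨h1, h2⟩ using (key n h1 h2).1
  · filter_upwards [hev] with n ⟨h1, h2⟩ using (key n h1 h2).2
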